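/- Let X be a real random variable with mean u and variance σ² ∈ (0, ∞), and for n ≥ 1 define β₂ = σ^{-2}·E[|X - u|²·1(|X - u| ≥ √n·σ)] and β₃ = (√n·σ³)^{-1}·E[|X - u|³·1(|X - u| ≤ √n·σ)]. Then √n·(β₂ + β₃) ≥ 23/27. -/

import Mathlib

open MeasureTheory ProbabilityTheory
open scoped ENNReal NNReal

lemma scalar_min {s : ℝ} (hs1 : s ≤ 1) :
    (23:ℝ)/27 ≤ s + (1 - s) ^ ((3:ℝ)/2) := by
  have h1 : (0:ℝ) ≤ 1 - s := by linarith
  set t := Real.sqrt (1 - s) with htdef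
  have ht0 : 0 ≤ t := Real.sqrt_nonneg _
  have ht2 : t ^ 2 = 1 - s := Real.sq_sqrt h1
  have hpow : (1 - s) ^ ((3:ℝ)/2) = t ^ 3 := by
    rw [htdef, Real.sqrt_eq_rpow, ← Real.rpow_natCast ((1-s) ^ ((1:ℝ)/2)) 3,
      ← Real.rpow_mul h1]
    norm_num
  rw [hpow]
  nlinarith [mul_nonneg (sq_nonneg (3*t - 2)) (by linarith : (0:ℝ) ≤ 3*t + 1)]

lemma beta_aux {Ω : Type*} [MeasurableSpace Ω] (μ : Measure Ω) [IsProbabilityMeasure μ]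
    (Y : Ω → ℝ) (σ sn : ℝ) (hσ : 0 < σ) (hsn1 : 1 ≤ sn)
    (hY : AEMeasurable Y μ) (hY0 : ∀ ω, 0 ≤ Y ω)
    (h2int : Integrable (fun ω => Y ω ^ 2) μ)
    (hvar' : ∫ ω, Y ω ^ 2 ∂μ = σ ^ 2) :
    (23:ℝ)/27 ≤ sn * ((σ^2)⁻¹ * (∫ ω, (if sn * σ ≤ Y ω then Y ω^2 else 0) ∂μ)
      + (sn * σ^3)⁻¹ * (∫ ω, (if Y ω ≤ sn * σ then Y ω^3 else 0) ∂μ)) := by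
  set a := sn * σ with ha
  have hsn0 : (0:ℝ) < sn := lt_of_lt_of_le one_pos hsn1
  have h0a : 0 < a := by positivity
  -- measurability of the pieces
  have hg2b : Measurable (fun y : ℝ => if a ≤ y then y^2 else 0) :=
    Measurable.ite (measurableSet_le measurable_const measurable_id)
      (measurable_id.pow_const 2) measurable_const
  have hg2s : Measurable (fun y : ℝ => if y ≤ a then y^2 else 0) :=
    Measurable.ite (measurableSet_le measurable_id measurable_const)
      (measurable_id.pow_const 2) measurable_const
  have hg3 : Measurable (fun y : ℝ => if y ≤ a then y^3 else 0) :=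
    Measurable.ite (measurableSet_le measurable_id measurable_const)
      (measurable_id.pow_const 3) measurable_const
  have hmA : AEMeasurable (fun ω => if a ≤ Y ω then Y ω ^2 else 0) μ :=
    hg2b.comp_aemeasurable hY
  have hmB : AEMeasurable (fun ω => if Y ω ≤ a then Y ω ^2 else 0) μ :=
    hg2s.comp_aemeasurable hY
  have hmC : AEMeasurable (fun ω => if Y ω ≤ a then Y ω ^3 else 0) μ :=
    hg3.comp_aemeasurable hY
  have hAint : Integrable (fun ω => if a ≤ Y ω then Y ω ^2 else 0) μ := by
    refine h2int.mono' hmA.aestronglyMeasurable (ae_of_all _ fun ω => ?_)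
    rw [Real.norm_eq_abs]
    by_cases h : a ≤ Y ω
    · simp [h, abs_of_nonneg (sq_nonneg (Y ω))]
    · simp only [h, if_false, abs_zero]; positivity
  have hBint : Integrable (fun ω => if Y ω ≤ a then Y ω ^2 else 0) μ := by
    refine h2int.mono' hmB.aestronglyMeasurable (ae_of_all _ fun ω => ?_)
    rw [Real.norm_eq_abs]
    by_cases h : Y ω ≤ a
    · simp [h, abs_of_nonneg (sq_nonneg (Y ω))]
    · simp only [h, if_false, abs_zero]; positivity
  have hCint : Integrable (fun ω => if Y ω ≤ a then Y ω ^3 else 0) μ := by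
    refine (h2int.const_mul a).mono' hmC.aestronglyMeasurable (ae_of_all _ fun ω => ?_)
    rw [Real.norm_eq_abs]
    have hy := hY0 ω
    by_cases h : Y ω ≤ a
    · simp only [h, if_true]
      rw [abs_of_nonneg (by positivity)]
      calc Y ω ^ 3 = Y ω * Y ω ^2 := by ring
        _ ≤ a * Y ω ^2 := by nlinarith
    · simp only [h, if_false, abs_zero]; positivity
  set A := ∫ ω, (if a ≤ Y ω then Y ω ^2 else 0) ∂μ with hAdef
  set B := ∫ ω, (if Y ω ≤ a then Y ω ^2 else 0) ∂μ with hBdef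
  set C := ∫ ω, (if Y ω ≤ a then Y ω ^3 else 0) ∂μ with hCdef
  have hA0 : 0 ≤ A := integral_nonneg fun ω => by dsimp only; split_ifs <;> positivity
  have hB0 : 0 ≤ B := integral_nonneg fun ω => by dsimp only; split_ifs <;> positivity
  have hC0 : 0 ≤ C := integral_nonneg fun ω => by
    have := hY0 ω
    simp only [Pi.zero_apply]
    split_ifs <;> positivity
  have hAB : σ^2 ≤ A + B := by
    rw [← hvar', ← integral_add hAint hBint]
    refine integral_mono h2int (hAint.add hBint) fun ω => ?_
    simp only [Pi.add_apply]
    by_cases h : a ≤ Y ω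
    · have h2 : (0:ℝ) ≤ if Y ω ≤ a then Y ω ^2 else 0 := by split_ifs <;> positivity
      simp only [h, if_true]; linarith
    · have h' : Y ω ≤ a := le_of_not_ge h
      have h2 : (0:ℝ) ≤ if a ≤ Y ω then Y ω ^2 else 0 := by split_ifs <;> positivity
      simp only [h', if_true]; linarith
  -- Hölder : B ≤ C ^ (2/3)
  have hHolder : B ≤ C ^ ((2:ℝ)/3) := by
    set F : Ω → ℝ≥0∞ := fun ω => ENNReal.ofReal (if Y ω ≤ a then Y ω ^2 else 0) with hF
    have hFmeas : AEMeasurable F μ := hmB.ennreal_ofReal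
    have hpq : Real.HolderConjugate ((3:ℝ)/2) 3 := ⟨by norm_num, by norm_num, by norm_num⟩
    have hFp : ∀ ω, F ω ^ ((3:ℝ)/2) = ENNReal.ofReal (if Y ω ≤ a then Y ω ^3 else 0) := by
      intro ω
      by_cases h' : Y ω ≤ a
      · simp only [hF, h', if_true]
        rw [ENNReal.ofReal_rpow_of_nonneg (sq_nonneg _) (by norm_num)]
        congr 1
        rw [← Real.rpow_natCast (Y ω) 2, ← Real.rpow_mul (hY0 ω),
          show ((2:ℕ):ℝ) * (3/2) = ((3:ℕ):ℝ) by norm_num, Real.rpow_natCast]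
      · simp only [hF, h', if_false, ENNReal.ofReal_zero]
        rw [ENNReal.zero_rpow_of_pos (by norm_num)]
    have hB' : ENNReal.ofReal B = ∫⁻ ω, F ω ∂μ :=
      ofReal_integral_eq_lintegral_ofReal hBint
        (ae_of_all _ fun ω => by dsimp only; split_ifs <;> positivity)
    have hC' : ENNReal.ofReal C = ∫⁻ ω, ENNReal.ofReal (if Y ω ≤ a then Y ω ^3 else 0) ∂μ :=
      ofReal_integral_eq_lintegral_ofReal hCint
        (ae_of_all _ fun ω => by
          dsimp only; split_ifs with h
          · have := hY0 ω; positivity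
          · exact le_refl _)
    have key : ENNReal.ofReal B ≤ (ENNReal.ofReal C) ^ ((2:ℝ)/3) := by
      have hH := ENNReal.lintegral_mul_le_Lp_mul_Lq μ hpq hFmeas
        (aemeasurable_const : AEMeasurable (fun _ : Ω => (1:ℝ≥0∞)) μ)
      simp only [Pi.mul_apply, mul_one, ENNReal.one_rpow, lintegral_one, measure_univ] at hH
      simp only [hFp] at hH
      rw [← hB', ← hC'] at hH
      norm_num at hH
      convert hH using 2
    rw [ENNReal.ofReal_rpow_of_nonneg hC0 (by norm_num)] at key
    exact (ENNReal.ofReal_le_ofReal_iff (by positivity)).mp key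
  -- conclude
  have hrhseq : sn * ((σ^2)⁻¹ * A + (sn * σ^3)⁻¹ * C) = sn * A / σ^2 + C / σ^3 := by
    field_simp
  rw [hrhseq]
  rcases le_or_gt (σ^2) A with hcase | hcase
  · have h1 : (1:ℝ) ≤ sn * A / σ^2 := by
      rw [le_div_iff₀ (by positivity)]
      nlinarith
    have h2 : 0 ≤ C / σ^3 := by positivity
    linarith
  · set s := A / σ^2 with hs
    have hs0 : 0 ≤ s := by positivity
    have hs1 : s ≤ 1 := by rw [hs, div_le_one (by positivity)]; linarith
    have hsA : s * σ^2 = A := by rw [hs]; field_simp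
    have hBlow : (1 - s) * σ^2 ≤ B := by nlinarith
    have hCrpow : B ^ ((3:ℝ)/2) ≤ C := by
      have h1 := Real.rpow_le_rpow hB0 hHolder (by norm_num : (0:ℝ) ≤ 3/2)
      rwa [← Real.rpow_mul hC0, show (2:ℝ)/3 * (3/2) = 1 by norm_num, Real.rpow_one] at h1
    have h2 : ((1-s)*σ^2) ^ ((3:ℝ)/2) ≤ B ^ ((3:ℝ)/2) :=
      Real.rpow_le_rpow (mul_nonneg (by linarith) (sq_nonneg σ)) hBlow (by norm_num)
    have h3 : ((1-s)*σ^2)^((3:ℝ)/2) = (1-s)^((3:ℝ)/2) * σ^3 := by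
      rw [Real.mul_rpow (by linarith) (sq_nonneg σ)]
      congr 1
      rw [← Real.rpow_natCast σ 2, ← Real.rpow_mul hσ.le,
        show ((2:ℕ):ℝ) * (3/2) = ((3:ℕ):ℝ) by norm_num, Real.rpow_natCast]
    have hClow : (1-s)^((3:ℝ)/2) * σ^3 ≤ C := by rw [← h3]; linarith
    have h4 : s ≤ sn * A / σ^2 := by
      rw [div_eq_mul_inv, hs, div_eq_mul_inv]
      have : A * (σ^2)⁻¹ ≤ sn * (A * (σ^2)⁻¹) := le_mul_of_one_le_left (by positivity) hsn1
      linarith [this]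
    have h5 : (1-s)^((3:ℝ)/2) ≤ C / σ^3 := by
      rw [le_div_iff₀ (by positivity)]; linarith
    have := scalar_min hs1
    linarith

theorem beta_sum_lower_bound
    {Ω : Type*} [MeasurableSpace Ω] (μ : Measure Ω) [IsProbabilityMeasure μ]
    (X : Ω → ℝ) (u σ : ℝ) (n : ℕ) (hn : 1 ≤ n)
    (hX2 : MemLp X 2 μ)
    (hmean : ∫ ω, X ω ∂μ = u)
    (hvar : variance X μ = σ^2)
    (hσ : 0 < σ) :
    (23 : ℝ)/27 ≤ Real.sqrt n *
      ((σ^2)⁻¹ * (∫ ω, (if Real.sqrt n * σ ≤ |X ω - u| then |X ω - u|^2 else 0) ∂μ) +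
       (Real.sqrt n * σ^3)⁻¹ *
        (∫ ω, (if |X ω - u| ≤ Real.sqrt n * σ then |X ω - u|^3 else 0) ∂μ)) := by
  have hsn1 : (1:ℝ) ≤ Real.sqrt n := by
    rw [show (1:ℝ) = Real.sqrt 1 by simp]
    exact Real.sqrt_le_sqrt (by exact_mod_cast hn)
  have hYm : AEMeasurable (fun ω => |X ω - u|) μ :=
    measurable_abs.comp_aemeasurable
      (hX2.aestronglyMeasurable.aemeasurable.sub aemeasurable_const)
  have h2int : Integrable (fun ω => |X ω - u| ^ 2) μ := by
    have := (hX2.sub (memLp_const u)).integrable_sq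
    refine this.congr (ae_of_all _ fun ω => ?_)
    simp [sq_abs]
  have hvar' : ∫ ω, |X ω - u| ^ 2 ∂μ = σ ^ 2 := by
    rw [← hvar, variance_eq_integral hX2.aestronglyMeasurable.aemeasurable, hmean]
    simp [sq_abs]
  exact beta_aux μ (fun ω => |X ω - u|) σ (Real.sqrt n) hσ hsn1 hYm
    (fun ω => abs_nonneg _) h2int hvar'
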